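/- For the two-pulson system, the quantity H = p₁ p₂ (1 − g(q₁−q₂))^{b−1} is a conserved quantity: dH/dt = 0, provided g(q₁(t)−q₂(t)) ≠ 1 along the solution (so the power is well defined). -/

import Mathlib

lemma deriv_even_neg {g : ℝ → ℝ} (hg : Differentiable ℝ g)
    (hgeven : ∀ x, g (-x) = g x) (x : ℝ) : deriv g (-x) = - deriv g x := by
  have h1 : HasDerivAt (fun y => g (-y)) (-(deriv g (-x))) x := by
    have := ((hg (-x)).hasDerivAt).comp x (hasDerivAt_neg x)
    simp only [mul_neg, mul_one] at this; exact this
  have h2 : HasDerivAt (fun y => g (-y)) (deriv g x) x := by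
    have : (fun y => g (-y)) = g := funext hgeven
    rw [this]; exact (hg x).hasDerivAt
  have := h1.unique h2
  linarith

/-- Conservation of `H = p₁ p₂ (1 - g(q₁-q₂))^(b-1)` for the two-pulson system,
provided `1 - g(q₁-q₂) > 0` along the solution. -/
theorem two_pulson_H_conserved
    (g : ℝ → ℝ) (b : ℝ)
    (hg : Differentiable ℝ g)
    (hgeven : ∀ x, g (-x) = g x)
    (p₁ p₂ q₁ q₂ : ℝ → ℝ)
    (hp₁ : ∀ t, HasDerivAt p₁ ((1 - b) * p₁ t * p₂ t * deriv g (q₁ t - q₂ t)) t)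
    (hp₂ : ∀ t, HasDerivAt p₂ ((1 - b) * p₁ t * p₂ t * deriv g (q₂ t - q₁ t)) t)
    (hq₁ : ∀ t, HasDerivAt q₁ (p₁ t + p₂ t * g (q₁ t - q₂ t)) t)
    (hq₂ : ∀ t, HasDerivAt q₂ (p₂ t + p₁ t * g (q₂ t - q₁ t)) t)
    (hpos : ∀ t, 0 < 1 - g (q₁ t - q₂ t)) :
    ∀ t, HasDerivAt
      (fun s => p₁ s * p₂ s * (1 - g (q₁ s - q₂ s)) ^ (b - 1)) 0 t := by
  intro t
  set G := g (q₁ t - q₂ t) with hG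
  set G' := deriv g (q₁ t - q₂ t) with hG'
  have hgsym : g (q₂ t - q₁ t) = G := by
    rw [hG, ← hgeven]; ring_nf
  have hgder : deriv g (q₂ t - q₁ t) = -G' := by
    rw [hG', ← deriv_even_neg hg hgeven]; ring_nf
  -- derivative of u = q₁ - q₂
  have hu : HasDerivAt (fun s => q₁ s - q₂ s)
      ((p₁ t - p₂ t) * (1 - G)) t := by
    have := (hq₁ t).sub (hq₂ t)
    rw [hgsym] at this
    exact this.congr_deriv (by ring)
  -- derivative of g ∘ u
  have hgu : HasDerivAt (fun s => g (q₁ s - q₂ s))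
      (G' * ((p₁ t - p₂ t) * (1 - G))) t :=
    (hg _).hasDerivAt.comp t hu
  -- derivative of 1 - g∘u
  have hf : HasDerivAt (fun s => 1 - g (q₁ s - q₂ s))
      (-(G' * ((p₁ t - p₂ t) * (1 - G)))) t := by
    exact ((hasDerivAt_const t (1:ℝ)).sub hgu).congr_deriv (by ring)
  have hne : (1 : ℝ) - G ≠ 0 := ne_of_gt (hpos t)
  have hF : HasDerivAt (fun s => (1 - g (q₁ s - q₂ s)) ^ (b - 1))
      ((-(G' * ((p₁ t - p₂ t) * (1 - G)))) * (b - 1) * (1 - G) ^ (b - 1 - 1)) t :=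
    hf.rpow_const (Or.inl hne)
  have hP : HasDerivAt (fun s => p₁ s * p₂ s)
      ((1 - b) * p₁ t * p₂ t * G' * p₂ t + p₁ t * ((1 - b) * p₁ t * p₂ t * (-G'))) t := by
    have := (hp₁ t).mul (hp₂ t)
    rw [hgder] at this
    exact this
  have hH := hP.mul hF
  refine hH.congr_deriv ?_
  have hpow : (1 - G) ^ (b - 1 - 1) * (1 - G) = (1 - G) ^ (b - 1) := by
    rw [← Real.rpow_add_one hne]; ring_nf
  have expand : ((1 - b) * p₁ t * p₂ t * G' * p₂ t + p₁ t * ((1 - b) * p₁ t * p₂ t * (-G'))) *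
        (1 - G) ^ (b - 1) +
      p₁ t * p₂ t * ((-(G' * ((p₁ t - p₂ t) * (1 - G)))) * (b - 1) * (1 - G) ^ (b - 1 - 1)) =
      (1 - b) * p₁ t * p₂ t * G' * (p₂ t - p₁ t) * (1 - G) ^ (b - 1)
      - (b - 1) * p₁ t * p₂ t * G' * (p₁ t - p₂ t) * ((1 - G) ^ (b - 1 - 1) * (1 - G)) := by
    ring
  rw [← hG, expand, hpow]
  ring
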